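/- arXiv:2508.01891 — 2 statements merged into one kernel-verified Lean document; each statement's English description precedes it below -/
import Mathlib

section
/- Let A : ℕ^d → Matrix (Fin s) (Fin s) ℝ with A(0) invertible. Then A has a unique two-sided convolutional inverse A^(-1), and for each k ∈ ℕ^d, A^(-1)(k) = [A(0)]^{-1} · Σ_{n=0}^{k₁+⋯+k_d} (𝕀 − A₀)^(n)(k), where A₀(l) = A(l)·[A(0)]^{-1}. -/
noncomputable def conv {d s : ℕ} (A B : (Fin d → ℕ) → Matrix (Fin s) (Fin s) ℝ) :
    (Fin d → ℕ) → Matrix (Fin s) (Fin s) ℝ :=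
  fun k => ∑ l ∈ Finset.Iic k, A l * B (k - l)

noncomputable def oneSeq {d s : ℕ} : (Fin d → ℕ) → Matrix (Fin s) (Fin s) ℝ :=
  fun k => if k = 0 then 1 else 0

noncomputable def convPow {d s : ℕ} (A : (Fin d → ℕ) → Matrix (Fin s) (Fin s) ℝ) :
    ℕ → (Fin d → ℕ) → Matrix (Fin s) (Fin s) ℝ
  | 0 => oneSeq
  | n + 1 => conv A (convPow A n)

section Aux

variable {d s : ℕ}

lemma conv_one_left (A : (Fin d → ℕ) → Matrix (Fin s) (Fin s) ℝ) :
    conv oneSeq A = A := by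
  funext k
  rw [conv, Finset.sum_eq_single 0]
  · simp [oneSeq]
  · intro b _ hb; simp [oneSeq, hb]
  · intro h; exact absurd (Finset.mem_Iic.mpr (zero_le : (0 : Fin d → ℕ) ≤ k)) h

lemma conv_one_right (A : (Fin d → ℕ) → Matrix (Fin s) (Fin s) ℝ) :
    conv A oneSeq = A := by
  funext k
  rw [conv, Finset.sum_eq_single k]
  · simp [oneSeq]
  · intro b hb hbk
    have hb' : b ≤ k := Finset.mem_Iic.mp hb
    have : ¬ (k - b = 0) := by
      rw [tsub_eq_zero_iff_le]
      intro hkb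
      exact hbk (le_antisymm hb' hkb)
    simp [oneSeq, this]
  · intro h; exact absurd (Finset.mem_Iic.mpr le_rfl) h

lemma conv_assoc (A B C : (Fin d → ℕ) → Matrix (Fin s) (Fin s) ℝ) :
    conv (conv A B) C = conv A (conv B C) := by
  funext k
  simp only [conv, Finset.sum_mul, Finset.mul_sum]
  rw [Finset.sum_sigma', Finset.sum_sigma']
  refine Finset.sum_nbij' (fun p => ⟨p.2, p.1 - p.2⟩) (fun p => ⟨p.1 + p.2, p.1⟩) ?_ ?_ ?_ ?_ ?_
  · rintro ⟨l, m⟩ hp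
    simp only [Finset.mem_sigma, Finset.mem_Iic] at hp ⊢
    exact ⟨hp.2.trans hp.1, tsub_le_tsub_right hp.1 m⟩
  · rintro ⟨m, j⟩ hp
    simp only [Finset.mem_sigma, Finset.mem_Iic] at hp ⊢
    constructor
    · calc m + j ≤ m + (k - m) := by exact add_le_add le_rfl hp.2
        _ = k := add_tsub_cancel_of_le hp.1
    · exact le_self_add
  · rintro ⟨l, m⟩ hp
    simp only [Finset.mem_sigma, Finset.mem_Iic] at hp
    simp only [Sigma.mk.inj_iff, heq_eq_eq]
    exact ⟨add_tsub_cancel_of_le hp.2, trivial⟩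
  · rintro ⟨m, j⟩ hp
    simp only [Sigma.mk.inj_iff, heq_eq_eq]
    exact ⟨trivial, add_tsub_cancel_left m j⟩
  · rintro ⟨l, m⟩ hp
    simp only [Finset.mem_sigma, Finset.mem_Iic] at hp
    have hk : k - m - (l - m) = k - l := by
      rw [tsub_tsub, add_tsub_cancel_of_le hp.2]
    rw [hk, mul_assoc]

lemma conv_sub_left (A B C : (Fin d → ℕ) → Matrix (Fin s) (Fin s) ℝ) :
    conv (A - B) C = conv A C - conv B C := by
  funext k
  simp [conv, sub_mul, Finset.sum_sub_distrib]

lemma conv_sum_right {N : ℕ} (A : (Fin d → ℕ) → Matrix (Fin s) (Fin s) ℝ)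
    (F : ℕ → (Fin d → ℕ) → Matrix (Fin s) (Fin s) ℝ) :
    conv A (fun m => ∑ n ∈ Finset.range N, F n m) =
      fun k => ∑ n ∈ Finset.range N, conv A (F n) k := by
  funext k
  simp only [conv, Finset.mul_sum]
  rw [Finset.sum_comm]

lemma conv_sum_left {N : ℕ} (A : (Fin d → ℕ) → Matrix (Fin s) (Fin s) ℝ)
    (F : ℕ → (Fin d → ℕ) → Matrix (Fin s) (Fin s) ℝ) :
    conv (fun m => ∑ n ∈ Finset.range N, F n m) A =
      fun k => ∑ n ∈ Finset.range N, conv (F n) A k := by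
  funext k
  simp only [conv, Finset.sum_mul]
  rw [Finset.sum_comm]

lemma convPow_succ_right (C : (Fin d → ℕ) → Matrix (Fin s) (Fin s) ℝ) (n : ℕ) :
    conv (convPow C n) C = convPow C (n + 1) := by
  induction n with
  | zero => show conv oneSeq C = conv C (convPow C 0)
            rw [conv_one_left]; show C = conv C oneSeq; rw [conv_one_right]
  | succ n ih =>
      show conv (conv C (convPow C n)) C = _
      rw [conv_assoc, ih]
      rfl

lemma convPow_eq_zero {C : (Fin d → ℕ) → Matrix (Fin s) (Fin s) ℝ} (hC0 : C 0 = 0) :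
    ∀ n (k : Fin d → ℕ), (∑ i, k i) < n → convPow C n k = 0 := by
  intro n
  induction n with
  | zero => intro k hk; omega
  | succ n ih =>
      intro k hk
      show (∑ l ∈ Finset.Iic k, C l * convPow C n (k - l)) = 0
      refine Finset.sum_eq_zero ?_
      intro l hl
      rcases eq_or_ne l 0 with rfl | hl0
      · rw [hC0, zero_mul]
      · have hlk : l ≤ k := Finset.mem_Iic.mp hl
        have hsum : (∑ i, (k - l) i) + (∑ i, l i) = ∑ i, k i := by
          rw [← Finset.sum_add_distrib]
          refine Finset.sum_congr rfl fun i _ => ?_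
          have : l i ≤ k i := hlk i
          simp only [Pi.sub_apply]
          omega
        have hlpos : 0 < ∑ i, l i := by
          obtain ⟨j, hj⟩ := Function.ne_iff.mp hl0
          have : 0 < l j := Nat.pos_of_ne_zero hj
          calc 0 < l j := this
            _ ≤ ∑ i, l i := Finset.single_le_sum (fun _ _ => Nat.zero_le _) (Finset.mem_univ j)
        have : (∑ i, (k - l) i) < n := by omega
        rw [ih _ this, mul_zero]

end Aux

theorem conv_inverse_formula {d s : ℕ}
    (A : (Fin d → ℕ) → Matrix (Fin s) (Fin s) ℝ) (hA : IsUnit (A 0)) :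
    (∃! B : (Fin d → ℕ) → Matrix (Fin s) (Fin s) ℝ,
        conv A B = oneSeq ∧ conv B A = oneSeq) ∧
    (∀ B : (Fin d → ℕ) → Matrix (Fin s) (Fin s) ℝ,
        conv A B = oneSeq ∧ conv B A = oneSeq →
        ∀ k : Fin d → ℕ,
          B k = (A 0)⁻¹ *
            ∑ n ∈ Finset.range (∑ i, k i + 1),
              convPow (oneSeq - fun l => A l * (A 0)⁻¹) n k) := by
  have hdet : IsUnit (A 0).det := (Matrix.isUnit_iff_isUnit_det _).mp hA
  have h1 : A 0 * (A 0)⁻¹ = 1 := Matrix.mul_nonsing_inv _ hdet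
  have h2 : (A 0)⁻¹ * A 0 = 1 := Matrix.nonsing_inv_mul _ hdet
  set C : (Fin d → ℕ) → Matrix (Fin s) (Fin s) ℝ :=
    oneSeq - fun l => A l * (A 0)⁻¹ with hC
  have hC0 : C 0 = 0 := by
    simp [hC, Pi.sub_apply, oneSeq, h1, sub_self]
  -- the candidate inverse
  set S : (Fin d → ℕ) → Matrix (Fin s) (Fin s) ℝ :=
    fun k => ∑ n ∈ Finset.range (∑ i, k i + 1), convPow C n k with hS
  set B₀ : (Fin d → ℕ) → Matrix (Fin s) (Fin s) ℝ := fun k => (A 0)⁻¹ * S k with hB₀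
  -- truncated sums
  have hST : ∀ (N : ℕ) (k : Fin d → ℕ), (∑ i, k i) < N →
      S k = ∑ n ∈ Finset.range N, convPow C n k := by
    intro N k hk
    rw [hS]
    refine Finset.sum_subset ?_ ?_
    · intro n hn
      simp only [Finset.mem_range] at hn ⊢
      omega
    · intro n _ hn
      simp only [Finset.mem_range, not_lt] at hn
      exact convPow_eq_zero hC0 n k (by omega)
  -- oneSeq - C = fun l => A l * (A 0)⁻¹
  have hOC : ∀ l : Fin d → ℕ, oneSeq l - C l = A l * (A 0)⁻¹ := by
    intro l
    simp [hC, Pi.sub_apply, sub_sub_cancel]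
  -- conv (oneSeq - C) (T N) k = oneSeq k - convPow C N k (telescoping)
  have htele_l : ∀ (N : ℕ) (k : Fin d → ℕ),
      conv (oneSeq - C) (fun m => ∑ n ∈ Finset.range N, convPow C n m) k =
        oneSeq k - convPow C N k := by
    intro N k
    rw [conv_sub_left, Pi.sub_apply, conv_one_left, conv_sum_right]
    have hpow : ∀ n, conv C (convPow C n) = convPow C (n + 1) := fun n => rfl
    simp only [hpow]
    rw [← Finset.sum_sub_distrib, Finset.sum_range_sub' (fun n => convPow C n k) N]
    rfl
  have htele_r : ∀ (N : ℕ) (k : Fin d → ℕ),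
      conv (fun m => ∑ n ∈ Finset.range N, convPow C n m) (oneSeq - C) k =
        oneSeq k - convPow C N k := by
    intro N k
    have hsub : ∀ (X : (Fin d → ℕ) → Matrix (Fin s) (Fin s) ℝ),
        conv X (oneSeq - C) = conv X oneSeq - conv X C := by
      intro X; funext m
      simp [conv, mul_sub, Finset.sum_sub_distrib]
    rw [hsub, Pi.sub_apply, conv_one_right, conv_sum_left]
    simp only [convPow_succ_right]
    rw [← Finset.sum_sub_distrib, Finset.sum_range_sub' (fun n => convPow C n k) N]
    rfl
  -- B₀ is a left and right inverse
  have hleft : conv A B₀ = oneSeq := by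
    funext k
    set N := ∑ i, k i + 1 with hN
    have step1 : conv A B₀ k =
        conv (oneSeq - C) (fun m => ∑ n ∈ Finset.range N, convPow C n m) k := by
      rw [conv, conv]
      refine Finset.sum_congr rfl fun l hl => ?_
      have hlk : l ≤ k := Finset.mem_Iic.mp hl
      have hle : (∑ i, (k - l) i) ≤ ∑ i, k i :=
        Finset.sum_le_sum fun i _ => tsub_le_self
      have hBl : B₀ (k - l) = (A 0)⁻¹ * S (k - l) := rfl
      rw [hBl, hST N (k - l) (by omega), Pi.sub_apply, hOC l, mul_assoc]
    rw [step1, htele_l N k, convPow_eq_zero hC0 N k (by omega), sub_zero]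
  have hright : conv B₀ A = oneSeq := by
    funext k
    set N := ∑ i, k i + 1 with hN
    have hAeq : ∀ m : Fin d → ℕ, A m = (oneSeq m - C m) * A 0 := by
      intro m
      rw [hOC m, mul_assoc, h2, mul_one]
    have step1 : conv B₀ A k =
        (A 0)⁻¹ * conv (fun m => ∑ n ∈ Finset.range N, convPow C n m) (oneSeq - C) k
          * A 0 := by
      rw [conv, conv, Finset.mul_sum, Finset.sum_mul]
      refine Finset.sum_congr rfl fun l hl => ?_
      have hlk : l ≤ k := Finset.mem_Iic.mp hl
      have hle : (∑ i, l i) ≤ ∑ i, k i :=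
        Finset.sum_le_sum fun i _ => hlk i
      have hBl : B₀ l = (A 0)⁻¹ * S l := rfl
      rw [hBl, hST N l (by omega), hAeq (k - l)]
      simp only [Pi.sub_apply, mul_assoc]
    rw [step1, htele_r N k, convPow_eq_zero hC0 N k (by omega), sub_zero]
    rcases eq_or_ne k 0 with rfl | hk0
    · simp [oneSeq, h2]
    · simp [oneSeq, hk0]
  -- uniqueness
  have huniq : ∀ B B' : (Fin d → ℕ) → Matrix (Fin s) (Fin s) ℝ,
      (conv A B = oneSeq ∧ conv B A = oneSeq) →
      (conv A B' = oneSeq ∧ conv B' A = oneSeq) → B = B' := by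
    intro B B' hB hB'
    calc B = conv B oneSeq := (conv_one_right B).symm
      _ = conv B (conv A B') := by rw [hB'.1]
      _ = conv (conv B A) B' := (conv_assoc B A B').symm
      _ = conv oneSeq B' := by rw [hB.2]
      _ = B' := conv_one_left B'
  refine ⟨⟨B₀, ⟨hleft, hright⟩, fun B hB => huniq B B₀ hB ⟨hleft, hright⟩⟩, ?_⟩
  intro B hB k
  have : B = B₀ := huniq B B₀ hB ⟨hleft, hright⟩
  rw [this]
end

section
/- A matrix sequence A : ℕ^d → Matrix (Fin s) (Fin s) ℝ has a convolutional inverse if and only if A can be written as a finite convolution product of elementary matrix sequences (row-swap sequences E_{ij}, scaling sequences D_i[α] with α convolutionally invertible, and row-addition sequences R_{ij}[α]). -/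
noncomputable def deltaSeq {d : ℕ} : (Fin d → ℕ) → ℝ :=
  fun k => if k = 0 then 1 else 0

/-- Elementary matrix sequences: row swaps, scalings by a convolutionally
invertible real sequence, and row additions. -/
def IsElementary {d s : ℕ} (E : (Fin d → ℕ) → Matrix (Fin s) (Fin s) ℝ) : Prop :=
  (∃ i j : Fin s,
      E = fun k => if k = 0
        then (1 : Matrix (Fin s) (Fin s) ℝ).submatrix (Equiv.swap i j) id else 0) ∨
  (∃ (i : Fin s) (α : (Fin d → ℕ) → ℝ), α 0 ≠ 0 ∧
      E = fun k => Matrix.of fun a b =>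
        if a = b then (if a = i then α k else deltaSeq k) else 0) ∨
  (∃ (i j : Fin s) (α : (Fin d → ℕ) → ℝ), i ≠ j ∧
      E = fun k => Matrix.of fun a b =>
        if a = b then deltaSeq k else if a = j ∧ b = i then α k else 0)

namespace ElimAux

open Matrix

variable {R : Type*} [CommRing R]

/-- Elementary matrices over a commutative ring. -/
def ElemM {n : ℕ} (E : Matrix (Fin n) (Fin n) R) : Prop :=
  (∃ i j : Fin n, E = (1 : Matrix (Fin n) (Fin n) R).submatrix (Equiv.swap i j) id) ∨
  (∃ (i : Fin n) (u : R), IsUnit u ∧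
      E = Matrix.of fun a b => if a = b then (if a = i then u else 1) else 0) ∨
  (∃ (i j : Fin n) (α : R), i ≠ j ∧
      E = Matrix.of fun a b => if a = b then 1 else if a = j ∧ b = i then α else 0)

lemma transvec_eq {n : ℕ} (i j : Fin n) (α : R) (h : i ≠ j) :
    (Matrix.of fun a b => if a = b then 1 else if a = j ∧ b = i then α else 0 :
      Matrix (Fin n) (Fin n) R) = 1 + Matrix.single j i α := by
  ext a b
  simp only [Matrix.of_apply, Matrix.add_apply, Matrix.one_apply, Matrix.single,
    Matrix.of_apply]
  by_cases hab : a = b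
  · subst hab
    have : ¬ (j = a ∧ i = a) := fun ⟨h1, h2⟩ => h (h2.trans h1.symm)
    simp [this]
  · simp only [hab, if_false]
    by_cases hji : a = j ∧ b = i
    · simp [hji.1.symm, hji.2.symm]
    · have : ¬ (j = a ∧ i = b) := fun ⟨h1, h2⟩ => hji ⟨h1.symm, h2.symm⟩
      simp [hji, this]

lemma swap_mul {n : ℕ} (i j : Fin n) (M : Matrix (Fin n) (Fin n) R) (a b : Fin n) :
    (((1 : Matrix (Fin n) (Fin n) R).submatrix (Equiv.swap i j) id) * M) a b
      = M (Equiv.swap i j a) b := by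
  rw [Matrix.mul_apply]
  simp [Matrix.one_apply, Finset.sum_ite_eq]

lemma dil_mul {n : ℕ} (i : Fin n) (u : R) (M : Matrix (Fin n) (Fin n) R) (a b : Fin n) :
    ((Matrix.of fun a b => if a = b then (if a = i then u else 1) else 0 :
        Matrix (Fin n) (Fin n) R) * M) a b = (if a = i then u else 1) * M a b := by
  rw [Matrix.mul_apply]
  simp [Finset.sum_ite_eq]

lemma elem_inv {n : ℕ} {E : Matrix (Fin n) (Fin n) R} (h : ElemM E) :
    ∃ E' : Matrix (Fin n) (Fin n) R, ElemM E' ∧ E * E' = 1 ∧ E' * E = 1 := by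
  rcases h with ⟨i, j, rfl⟩ | ⟨i, u, hu, rfl⟩ | ⟨i, j, α, hij, rfl⟩
  · refine ⟨_, Or.inl ⟨i, j, rfl⟩, ?_, ?_⟩ <;>
    · ext a b
      rw [show ((1 : Matrix (Fin n) (Fin n) R).submatrix (Equiv.swap i j) id) * _ = _ from rfl]
      rw [swap_mul]
      simp [Matrix.one_apply, Matrix.submatrix_apply, Equiv.swap_apply_self]
  · refine ⟨Matrix.of fun a b => if a = b then (if a = i then (↑hu.unit⁻¹ : R) else 1) else 0,
      Or.inr (Or.inl ⟨i, _, hu.unit⁻¹.isUnit, rfl⟩), ?_, ?_⟩ <;>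
    · ext a b
      rw [dil_mul]
      by_cases hab : a = b
      · subst hab
        by_cases hai : a = i
        · subst hai
          simp [Matrix.one_apply, hu.mul_val_inv, hu.val_inv_mul]
        · simp [hai, Matrix.one_apply]
      · simp [hab, Matrix.one_apply]
  · refine ⟨Matrix.of fun a b => if a = b then 1 else if a = j ∧ b = i then -α else 0,
      Or.inr (Or.inr ⟨i, j, -α, hij, rfl⟩), ?_, ?_⟩ <;>
    · rw [transvec_eq i j _ hij, transvec_eq i j _ hij]
      have hz : ∀ β γ : R, Matrix.single j i β * Matrix.single j i γ
          = (0 : Matrix (Fin n) (Fin n) R) :=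
        fun β γ => Matrix.single_mul_single_of_ne _ _ _ _ hij _
      have h2 : ∀ β γ : R, Matrix.single j i β + Matrix.single j i γ
          = Matrix.single j i (β + γ) :=
        fun β γ => (Matrix.single_add _ _ _ _).symm
      rw [add_mul, mul_add, mul_add, one_mul, one_mul, mul_one, hz, add_zero, add_assoc, h2]
      simp

lemma elem_isUnit {n : ℕ} {E : Matrix (Fin n) (Fin n) R} (h : ElemM E) : IsUnit E := by
  obtain ⟨E', _, h1, h2⟩ := elem_inv h
  exact ⟨⟨E, E', h1, h2⟩, rfl⟩


lemma clear_col {n : ℕ} (i0 : Fin n) (c : Fin n → R) (S : Finset (Fin n)) (h : i0 ∉ S) :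
    ∃ L : List (Matrix (Fin n) (Fin n) R), (∀ E ∈ L, ElemM E) ∧
      L.prod = 1 + ∑ a ∈ S, Matrix.single a i0 (c a) := by
  classical
  induction S using Finset.induction with
  | empty => exact ⟨[], by simp, by simp⟩
  | @insert a S ha ih =>
    obtain ⟨L, hL, hLprod⟩ := ih (fun hh => h (Finset.mem_insert_of_mem hh))
    have hai0 : i0 ≠ a := fun hh => h (hh ▸ Finset.mem_insert_self a S)
    refine ⟨(1 + Matrix.single a i0 (c a)) :: L, ?_, ?_⟩
    · intro E hE
      rcases List.mem_cons.1 hE with rfl | hE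
      · exact Or.inr (Or.inr ⟨i0, a, c a, hai0, (transvec_eq i0 a (c a) hai0).symm⟩)
      · exact hL E hE
    · rw [List.prod_cons, hLprod, Finset.sum_insert ha]
      have hz : Matrix.single a i0 (c a) * (∑ b ∈ S, Matrix.single b i0 (c b))
          = 0 := by
        rw [Finset.mul_sum]
        refine Finset.sum_eq_zero fun b hb => ?_
        exact Matrix.single_mul_single_of_ne _ _ _ _
          (fun hh => h (Finset.mem_insert_of_mem (by rw [hh]; exact hb))) _
      rw [mul_add, add_mul, add_mul, mul_one, one_mul, hz, add_zero, mul_one, add_assoc]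

lemma clear_row {n : ℕ} (i0 : Fin n) (c : Fin n → R) (S : Finset (Fin n)) (h : i0 ∉ S) :
    ∃ L : List (Matrix (Fin n) (Fin n) R), (∀ E ∈ L, ElemM E) ∧
      L.prod = 1 + ∑ b ∈ S, Matrix.single i0 b (c b) := by
  classical
  induction S using Finset.induction with
  | empty => exact ⟨[], by simp, by simp⟩
  | @insert a S ha ih =>
    obtain ⟨L, hL, hLprod⟩ := ih (fun hh => h (Finset.mem_insert_of_mem hh))
    have hai0 : a ≠ i0 := fun hh => h (hh ▸ Finset.mem_insert_self a S)
    refine ⟨(1 + Matrix.single i0 a (c a)) :: L, ?_, ?_⟩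
    · intro E hE
      rcases List.mem_cons.1 hE with rfl | hE
      · exact Or.inr (Or.inr ⟨a, i0, c a, hai0, (transvec_eq a i0 (c a) hai0).symm⟩)
      · exact hL E hE
    · rw [List.prod_cons, hLprod, Finset.sum_insert ha]
      have hz : Matrix.single i0 a (c a) * (∑ b ∈ S, Matrix.single i0 b (c b))
          = 0 := by
        rw [Finset.mul_sum]
        refine Finset.sum_eq_zero fun b hb => ?_
        exact Matrix.single_mul_single_of_ne _ _ _ _ hai0 _
      rw [mul_add, add_mul, add_mul, mul_one, one_mul, hz, add_zero, mul_one, add_assoc]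

/-- Embed an `n × n` matrix as the lower-right block of an `(n+1) × (n+1)` matrix
with a `1` in the top-left corner. -/
def embed {n : ℕ} (B : Matrix (Fin n) (Fin n) R) : Matrix (Fin (n + 1)) (Fin (n + 1)) R :=
  Matrix.of (Fin.cons (Fin.cons 1 0) (fun a => Fin.cons 0 (B a)))

@[simp] lemma embed_zero_zero {n : ℕ} (B : Matrix (Fin n) (Fin n) R) : embed B 0 0 = 1 := rfl
@[simp] lemma embed_zero_succ {n : ℕ} (B : Matrix (Fin n) (Fin n) R) (b : Fin n) :
    embed B 0 b.succ = 0 := by simp [embed]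
@[simp] lemma embed_succ_zero {n : ℕ} (B : Matrix (Fin n) (Fin n) R) (a : Fin n) :
    embed B a.succ 0 = 0 := by simp [embed]
@[simp] lemma embed_succ_succ {n : ℕ} (B : Matrix (Fin n) (Fin n) R) (a b : Fin n) :
    embed B a.succ b.succ = B a b := by simp [embed]

lemma embed_one {n : ℕ} : embed (1 : Matrix (Fin n) (Fin n) R) = 1 := by
  ext a b
  refine Fin.cases ?_ (fun a' => ?_) a <;> refine Fin.cases ?_ (fun b' => ?_) b <;>
    simp [Matrix.one_apply, Fin.succ_ne_zero, (Fin.succ_ne_zero _).symm, Fin.succ_inj]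

lemma embed_mul {n : ℕ} (B C : Matrix (Fin n) (Fin n) R) :
    embed B * embed C = embed (B * C) := by
  ext a b
  rw [Matrix.mul_apply]
  rw [Fin.sum_univ_succ]
  refine Fin.cases ?_ (fun a' => ?_) a <;> refine Fin.cases ?_ (fun b' => ?_) b <;>
    simp [Matrix.mul_apply]

lemma embed_list_prod {n : ℕ} (L : List (Matrix (Fin n) (Fin n) R)) :
    (L.map embed).prod = embed L.prod := by
  induction L with
  | nil => simp [embed_one]
  | cons E L ih => simp [List.prod_cons, ih, embed_mul]

lemma swap_succ {n : ℕ} (i j a : Fin n) :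
    Equiv.swap i.succ j.succ a.succ = (Equiv.swap i j a).succ := by
  rcases eq_or_ne a i with rfl | hai
  · simp
  · rcases eq_or_ne a j with rfl | haj
    · simp
    · rw [Equiv.swap_apply_of_ne_of_ne hai haj,
        Equiv.swap_apply_of_ne_of_ne (fun h => hai (Fin.succ_inj.1 h))
          (fun h => haj (Fin.succ_inj.1 h))]

lemma swap_succ_zero {n : ℕ} (i j : Fin n) :
    Equiv.swap i.succ j.succ (0 : Fin (n + 1)) = 0 :=
  Equiv.swap_apply_of_ne_of_ne (Fin.succ_ne_zero i).symm (Fin.succ_ne_zero j).symm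

lemma elem_embed {n : ℕ} {E : Matrix (Fin n) (Fin n) R} (h : ElemM E) : ElemM (embed E) := by
  rcases h with ⟨i, j, rfl⟩ | ⟨i, u, hu, rfl⟩ | ⟨i, j, α, hij, rfl⟩
  · refine Or.inl ⟨i.succ, j.succ, ?_⟩
    ext a b
    refine Fin.cases ?_ (fun a' => ?_) a <;> refine Fin.cases ?_ (fun b' => ?_) b <;>
      simp [Matrix.one_apply, Matrix.submatrix_apply, swap_succ, swap_succ_zero,
        Fin.succ_ne_zero, (Fin.succ_ne_zero _).symm, Fin.succ_inj]
  · refine Or.inr (Or.inl ⟨i.succ, u, hu, ?_⟩)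
    ext a b
    refine Fin.cases ?_ (fun a' => ?_) a <;> refine Fin.cases ?_ (fun b' => ?_) b <;>
      simp [Fin.succ_ne_zero, (Fin.succ_ne_zero _).symm, Fin.succ_inj]
  · refine Or.inr (Or.inr ⟨i.succ, j.succ, α, fun h => hij (Fin.succ_inj.1 h), ?_⟩)
    ext a b
    refine Fin.cases ?_ (fun a' => ?_) a <;> refine Fin.cases ?_ (fun b' => ?_) b <;>
      simp [Fin.succ_ne_zero, (Fin.succ_ne_zero _).symm, Fin.succ_inj]


lemma prod_isUnit {n : ℕ} {L : List (Matrix (Fin n) (Fin n) R)}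
    (h : ∀ E ∈ L, ElemM E) : IsUnit L.prod := by
  induction L with
  | nil => simpa using isUnit_one
  | cons E L ih =>
    rw [List.prod_cons]
    exact (elem_isUnit (h E (List.mem_cons_self))).mul
      (ih fun E' hE' => h E' (List.mem_cons_of_mem _ hE'))

lemma inv_list {n : ℕ} {L : List (Matrix (Fin n) (Fin n) R)}
    (h : ∀ E ∈ L, ElemM E) :
    ∃ L' : List (Matrix (Fin n) (Fin n) R), (∀ E ∈ L', ElemM E) ∧ L'.prod * L.prod = 1 := by
  induction L with
  | nil => exact ⟨[], by simp, by simp⟩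
  | cons E L ih =>
    obtain ⟨L', hL', hinv⟩ := ih fun E' hE' => h E' (List.mem_cons_of_mem _ hE')
    obtain ⟨E', hE'elem, _, hE'E⟩ := elem_inv (h E (List.mem_cons_self))
    refine ⟨L' ++ [E'], ?_, ?_⟩
    · intro F hF
      rcases List.mem_append.1 hF with hF | hF
      · exact hL' F hF
      · rw [List.mem_singleton.1 hF]; exact hE'elem
    · rw [List.prod_append, List.prod_singleton, List.prod_cons]
      calc L'.prod * E' * (E * L.prod) = L'.prod * (E' * E) * L.prod := by
            rw [mul_assoc, mul_assoc, mul_assoc]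
        _ = 1 := by rw [hE'E, mul_one, hinv]

lemma exists_isUnit_of_isUnit_sum [IsLocalRing R] {ι : Type*} {s : Finset ι} {f : ι → R}
    (h : IsUnit (∑ x ∈ s, f x)) : ∃ x ∈ s, IsUnit (f x) := by
  classical
  induction s using Finset.induction with
  | empty => simp at h
  | @insert a s ha ih =>
    rw [Finset.sum_insert ha] at h
    rcases IsLocalRing.isUnit_or_isUnit_of_isUnit_add h with h1 | h2
    · exact ⟨a, Finset.mem_insert_self _ _, h1⟩
    · obtain ⟨x, hx, hux⟩ := ih h2
      exact ⟨x, Finset.mem_insert_of_mem hx, hux⟩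

lemma det_block {n : ℕ} (M : Matrix (Fin (n + 1)) (Fin (n + 1)) R) (h0 : M 0 0 = 1)
    (hc : ∀ a : Fin n, M a.succ 0 = 0) :
    M.det = (M.submatrix Fin.succ Fin.succ).det := by
  rw [Matrix.det_succ_column_zero, Fin.sum_univ_succ]
  simp [h0, hc, Fin.succAbove_zero]

lemma sum_erase_zero {n : ℕ} (f : Fin (n + 1) → R) :
    ∑ b ∈ Finset.univ.erase (0 : Fin (n + 1)), f b = ∑ b : Fin n, f b.succ := by
  have h1 := Fin.sum_univ_succ f
  have h2 := Finset.sum_erase_add Finset.univ f (Finset.mem_univ (0 : Fin (n + 1)))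
  linear_combination h1 + h2


lemma elim_aux [IsLocalRing R] :
    ∀ (n : ℕ) (M : Matrix (Fin n) (Fin n) R), IsUnit M →
      ∃ L : List (Matrix (Fin n) (Fin n) R), (∀ E ∈ L, ElemM E) ∧ M = L.prod := by
  intro n
  induction n with
  | zero => exact fun M _ => ⟨[], by simp, Subsingleton.elim _ _⟩
  | succ n ih =>
    intro M hM
    classical
    -- find a unit entry in column 0
    have hdet : IsUnit M.det := (Matrix.isUnit_iff_isUnit_det M).1 hM
    rw [Matrix.det_apply] at hdet
    obtain ⟨σ, -, hσ⟩ := exists_isUnit_of_isUnit_sum hdet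
    have hprod : IsUnit (∏ k, M (σ k) k) := by
      rcases Int.units_eq_one_or (Equiv.Perm.sign σ) with h | h <;> rw [h, Units.smul_def] at hσ
      · simpa using hσ
      · rw [Units.val_neg, Units.val_one, neg_zsmul, one_zsmul] at hσ
        have := hσ.neg
        rwa [neg_neg] at this
    have h00 : IsUnit (M (σ 0) 0) := by
      have hps := Finset.mul_prod_erase Finset.univ (fun k => M (σ k) k)
        (Finset.mem_univ (0 : Fin (n + 1)))
      rw [← hps] at hprod
      exact isUnit_of_mul_isUnit_left hprod
    set i := σ 0 with hi
    -- Step 1: swap rows 0 and i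
    set S : Matrix (Fin (n + 1)) (Fin (n + 1)) R :=
      (1 : Matrix (Fin (n + 1)) (Fin (n + 1)) R).submatrix (Equiv.swap 0 i) id with hSdef
    have hSelem : ElemM S := Or.inl ⟨0, i, rfl⟩
    set M₁ := S * M with hM₁def
    have hM₁00 : IsUnit (M₁ 0 0) := by
      rw [hM₁def, swap_mul, Equiv.swap_apply_left]
      exact h00
    -- Step 2: scale row 0 by the inverse of the pivot
    set D : Matrix (Fin (n + 1)) (Fin (n + 1)) R :=
      Matrix.of fun a b => if a = b then (if a = (0 : Fin (n + 1)) then (↑hM₁00.unit⁻¹ : R) else 1)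
        else 0 with hDdef
    have hDelem : ElemM D := Or.inr (Or.inl ⟨0, _, hM₁00.unit⁻¹.isUnit, rfl⟩)
    set M₂ := D * M₁ with hM₂def
    have hM₂ap : ∀ a b, M₂ a b = (if a = (0 : Fin (n + 1)) then (↑hM₁00.unit⁻¹ : R) else 1)
        * M₁ a b := fun a b => dil_mul _ _ _ _ _
    have hM₂00 : M₂ 0 0 = 1 := by rw [hM₂ap]; simp [hM₁00.val_inv_mul]
    -- Step 3: clear column 0
    obtain ⟨Lc, hLc, hLcprod⟩ := clear_col (0 : Fin (n + 1)) (fun a => -(M₂ a 0))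
      (Finset.univ.erase 0) (Finset.notMem_erase _ _)
    set M₃ := Lc.prod * M₂ with hM₃def
    have hM₃ap : ∀ p q, M₃ p q = M₂ p q +
        ∑ a ∈ Finset.univ.erase (0 : Fin (n + 1)),
          (if p = a then -(M₂ a 0) * M₂ 0 q else 0) := by
      intro p q
      rw [hM₃def, hLcprod, add_mul, one_mul, Matrix.add_apply]
      congr 1
      rw [Finset.sum_mul, Matrix.sum_apply]
      refine Finset.sum_congr rfl fun a _ => ?_
      by_cases hpa : p = a
      · subst hpa; simp
      · have hap : ¬ a = p := fun h => hpa h.symm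
        simp [Matrix.mul_apply, Matrix.single, hap, hpa]
    have hM₃row0 : ∀ q, M₃ 0 q = M₂ 0 q := by
      intro q
      rw [hM₃ap]
      rw [Finset.sum_ite_eq]
      simp
    have hM₃succ : ∀ (a : Fin n) q, M₃ a.succ q = M₂ a.succ q - M₂ a.succ 0 * M₂ 0 q := by
      intro a q
      rw [hM₃ap, Finset.sum_ite_eq]
      simp [Fin.succ_ne_zero, sub_eq_add_neg]
    have hM₃00 : M₃ 0 0 = 1 := by rw [hM₃row0, hM₂00]
    have hM₃col : ∀ a : Fin n, M₃ a.succ 0 = 0 := by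
      intro a
      rw [hM₃succ, hM₂00, mul_one, sub_self]
    have hM₃U : IsUnit M₃ := by
      rw [hM₃def, hM₂def, hM₁def]
      exact (prod_isUnit hLc).mul ((elem_isUnit hDelem).mul ((elem_isUnit hSelem).mul hM))
    -- the lower-right block
    set B := M₃.submatrix Fin.succ Fin.succ with hBdef
    have hBU : IsUnit B := by
      rw [Matrix.isUnit_iff_isUnit_det, ← det_block M₃ hM₃00 hM₃col]
      exact (Matrix.isUnit_iff_isUnit_det M₃).1 hM₃U
    set Binv : Matrix (Fin n) (Fin n) R := ↑hBU.unit⁻¹ with hBinvdef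
    have hBi2 : Binv * B = 1 := hBU.val_inv_mul
    -- Step 4: clear row 0
    set c₂ : Fin (n + 1) → R :=
      fun b => Fin.cases 0 (fun b' => -(∑ k, M₃ 0 k.succ * Binv k b')) b with hc₂def
    have hc₂succ : ∀ b' : Fin n, c₂ b'.succ = -(∑ k, M₃ 0 k.succ * Binv k b') :=
      fun b' => by rw [hc₂def]; simp
    obtain ⟨Lr, hLr, hLrprod⟩ := clear_row (0 : Fin (n + 1)) c₂
      (Finset.univ.erase 0) (Finset.notMem_erase _ _)
    set M₄ := Lr.prod * M₃ with hM₄def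
    have hM₄ap : ∀ p q, M₄ p q = M₃ p q +
        ∑ b ∈ Finset.univ.erase (0 : Fin (n + 1)),
          (if p = (0 : Fin (n + 1)) then c₂ b * M₃ b q else 0) := by
      intro p q
      rw [hM₄def, hLrprod, add_mul, one_mul, Matrix.add_apply]
      congr 1
      rw [Finset.sum_mul, Matrix.sum_apply]
      refine Finset.sum_congr rfl fun b _ => ?_
      by_cases hp0 : p = (0 : Fin (n + 1))
      · subst hp0; simp
      · have h0p : ¬ (0 : Fin (n + 1)) = p := fun h => hp0 h.symm
        simp [Matrix.mul_apply, Matrix.single, h0p, hp0]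
    have hM₄succ : ∀ (a : Fin n) q, M₄ a.succ q = M₃ a.succ q := by
      intro a q
      rw [hM₄ap]
      simp [Fin.succ_ne_zero]
    have hkey : ∀ j : Fin n, ∑ b' : Fin n, c₂ b'.succ * B b' j = -(M₃ 0 j.succ) := by
      intro j
      calc ∑ b' : Fin n, c₂ b'.succ * B b' j
          = ∑ b' : Fin n, -∑ k, M₃ 0 k.succ * Binv k b' * B b' j := by
            refine Finset.sum_congr rfl fun b' _ => ?_
            rw [hc₂succ, neg_mul, Finset.sum_mul]
        _ = -∑ k, ∑ b' : Fin n, M₃ 0 k.succ * (Binv k b' * B b' j) := by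
            rw [Finset.sum_neg_distrib, Finset.sum_comm]
            congr 1
            refine Finset.sum_congr rfl fun k _ => ?_
            refine Finset.sum_congr rfl fun b' _ => ?_
            rw [mul_assoc]
        _ = -∑ k, M₃ 0 k.succ * (Binv * B) k j := by
            congr 1
            refine Finset.sum_congr rfl fun k _ => ?_
            rw [← Finset.mul_sum, Matrix.mul_apply]
        _ = -(M₃ 0 j.succ) := by
            rw [hBi2]
            simp [Matrix.one_apply]
    have hM₄eq : M₄ = embed B := by
      ext p q
      refine Fin.cases ?_ (fun a => ?_) p
      · rw [hM₄ap]
        rw [Finset.sum_congr rfl (fun b _ => if_pos rfl)]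
        rw [sum_erase_zero (fun b => c₂ b * M₃ b q)]
        refine Fin.cases ?_ (fun j => ?_) q
        · rw [hM₃00]
          simp [hM₃col]
        · have : ∀ b' : Fin n, M₃ b'.succ j.succ = B b' j := fun b' => rfl
          simp only [this]
          rw [hkey j]
          simp
      · rw [hM₄succ]
        refine Fin.cases ?_ (fun j => ?_) q
        · rw [hM₃col]; simp
        · simp [hBdef]
    -- assemble
    set Ltot : List (Matrix (Fin (n + 1)) (Fin (n + 1)) R) := Lr ++ Lc ++ [D, S] with hLtotdef
    have hLtotElem : ∀ E ∈ Ltot, ElemM E := by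
      intro E hE
      rw [hLtotdef] at hE
      rcases List.mem_append.1 hE with hE | hE
      · rcases List.mem_append.1 hE with hE | hE
        · exact hLr E hE
        · exact hLc E hE
      · rcases List.mem_cons.1 hE with rfl | hE
        · exact hDelem
        · rcases List.mem_cons.1 hE with rfl | hE
          · exact hSelem
          · exact absurd hE (List.not_mem_nil)
    have hLtotprod : Ltot.prod * M = embed B := by
      rw [hLtotdef]
      rw [← hM₄eq, hM₄def, hM₃def, hM₂def, hM₁def]
      simp [List.prod_append, List.prod_cons, mul_assoc]
    obtain ⟨L', hL', hinv⟩ := inv_list hLtotElem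
    obtain ⟨LB, hLB, hLBprod⟩ := ih B hBU
    refine ⟨L' ++ LB.map embed, ?_, ?_⟩
    · intro E hE
      rcases List.mem_append.1 hE with hE | hE
      · exact hL' E hE
      · obtain ⟨F, hF, rfl⟩ := List.mem_map.1 hE
        exact elem_embed (hLB F hF)
    · rw [List.prod_append, embed_list_prod, ← hLBprod, ← hLtotprod, ← mul_assoc, hinv, one_mul]

theorem isUnit_iff_elem_prod [IsLocalRing R] {n : ℕ} (M : Matrix (Fin n) (Fin n) R) :
    IsUnit M ↔ ∃ L : List (Matrix (Fin n) (Fin n) R), (∀ E ∈ L, ElemM E) ∧ M = L.prod := by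
  constructor
  · exact elim_aux n M
  · rintro ⟨L, hL, rfl⟩
    exact prod_isUnit hL


end ElimAux

noncomputable section Translation

open ElimAux

variable {d s : ℕ}

/-- Reinterpret a sequence on `Fin d → ℕ` as a multivariate power series. -/
def toPS (a : (Fin d → ℕ) → ℝ) : MvPowerSeries (Fin d) ℝ :=
  fun l => a l

/-- Reinterpret a multivariate power series as a sequence on `Fin d → ℕ`. -/
def fromPS (f : MvPowerSeries (Fin d) ℝ) : (Fin d → ℕ) → ℝ :=
  fun k => MvPowerSeries.coeff (Finsupp.equivFunOnFinite.symm k) f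

@[simp] lemma coeff_toPS (a : (Fin d → ℕ) → ℝ) (l : Fin d →₀ ℕ) :
    MvPowerSeries.coeff l (toPS a) = a l := rfl

@[simp] lemma toPS_fromPS (f : MvPowerSeries (Fin d) ℝ) : toPS (fromPS f) = f := by
  apply MvPowerSeries.ext
  intro l
  rw [coeff_toPS]
  show MvPowerSeries.coeff (Finsupp.equivFunOnFinite.symm l) f = _
  rw [Finsupp.equivFunOnFinite_symm_coe]

@[simp] lemma fromPS_toPS (a : (Fin d → ℕ) → ℝ) : fromPS (toPS a) = a := by
  funext k
  show toPS a (Finsupp.equivFunOnFinite.symm k) = a k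
  show a (Finsupp.equivFunOnFinite (Finsupp.equivFunOnFinite.symm k)) = a k
  rw [Equiv.apply_symm_apply]

lemma symm_zero : (Finsupp.equivFunOnFinite.symm (0 : Fin d → ℕ)) = 0 := by
  apply DFunLike.coe_injective
  show ⇑(Finsupp.equivFunOnFinite.symm (0 : Fin d → ℕ)) = _
  rw [show ⇑(Finsupp.equivFunOnFinite.symm (0 : Fin d → ℕ))
    = Finsupp.equivFunOnFinite (Finsupp.equivFunOnFinite.symm (0 : Fin d → ℕ)) from rfl,
    Equiv.apply_symm_apply]
  simp

lemma constantCoeff_toPS (a : (Fin d → ℕ) → ℝ) :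
    MvPowerSeries.constantCoeff (toPS a) = a 0 := by
  rw [← MvPowerSeries.coeff_zero_eq_constantCoeff, coeff_toPS]
  simp

lemma isUnit_toPS (a : (Fin d → ℕ) → ℝ) : IsUnit (toPS a) ↔ a 0 ≠ 0 := by
  rw [MvPowerSeries.isUnit_iff_constantCoeff, constantCoeff_toPS, isUnit_iff_ne_zero]

/-- Reinterpret a matrix sequence as a matrix of power series. -/
def Phi (A : (Fin d → ℕ) → Matrix (Fin s) (Fin s) ℝ) :
    Matrix (Fin s) (Fin s) (MvPowerSeries (Fin d) ℝ) :=
  Matrix.of fun i j => toPS (fun k => A k i j)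

def PhiInv (N : Matrix (Fin s) (Fin s) (MvPowerSeries (Fin d) ℝ)) :
    (Fin d → ℕ) → Matrix (Fin s) (Fin s) ℝ :=
  fun k => Matrix.of fun i j => fromPS (N i j) k

@[simp] lemma PhiInv_Phi (A : (Fin d → ℕ) → Matrix (Fin s) (Fin s) ℝ) : PhiInv (Phi A) = A := by
  funext k
  ext i j
  show fromPS (toPS fun k => A k i j) k = A k i j
  rw [fromPS_toPS]

@[simp] lemma Phi_PhiInv (N : Matrix (Fin s) (Fin s) (MvPowerSeries (Fin d) ℝ)) :
    Phi (PhiInv N) = N := by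
  apply Matrix.ext
  intro i j
  show toPS (fun k => fromPS (N i j) k) = N i j
  rw [show (fun k => fromPS (N i j) k) = fromPS (N i j) from rfl, toPS_fromPS]

lemma Phi_one : Phi (oneSeq : (Fin d → ℕ) → Matrix (Fin s) (Fin s) ℝ) = 1 := by
  apply Matrix.ext
  intro i j
  apply MvPowerSeries.ext
  intro l
  by_cases hij : i = j <;> by_cases hl0 : l = 0 <;>
    simp [Phi, oneSeq, Matrix.one_apply, hij, hl0, MvPowerSeries.coeff_one,
      Finsupp.coe_eq_zero]

lemma Phi_mul (A B : (Fin d → ℕ) → Matrix (Fin s) (Fin s) ℝ) :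
    Phi (conv A B) = Phi A * Phi B := by
  classical
  apply Matrix.ext
  intro i j
  apply MvPowerSeries.ext
  intro l
  rw [Matrix.mul_apply]
  rw [map_sum]
  have hrhs : ∀ t : Fin s, MvPowerSeries.coeff l (Phi A i t * Phi B t j)
      = ∑ p ∈ Finset.HasAntidiagonal.antidiagonal l, A (p.1 : Fin d → ℕ) i t * B (p.2 : Fin d → ℕ) t j := by
    intro t
    rw [MvPowerSeries.coeff_mul]
    rfl
  simp only [hrhs]
  rw [Finset.sum_comm]
  show MvPowerSeries.coeff l (toPS fun k => conv A B k i j) = _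
  rw [coeff_toPS]
  show (∑ m ∈ Finset.Iic (l : Fin d → ℕ), A m * B ((l : Fin d → ℕ) - m)) i j = _
  rw [Matrix.sum_apply]
  refine Finset.sum_bij' (i := fun m _ => (Finsupp.equivFunOnFinite.symm m,
      Finsupp.equivFunOnFinite.symm ((l : Fin d → ℕ) - m)))
    (j := fun p _ => (p.1 : Fin d → ℕ)) ?_ ?_ ?_ ?_ ?_
  · intro m hm
    rw [Finset.HasAntidiagonal.mem_antidiagonal]
    apply DFunLike.coe_injective
    show ⇑(Finsupp.equivFunOnFinite.symm m
      + Finsupp.equivFunOnFinite.symm ((l : Fin d → ℕ) - m)) = ⇑l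
    rw [Finsupp.coe_add]
    show (Finsupp.equivFunOnFinite (Finsupp.equivFunOnFinite.symm m))
        + (Finsupp.equivFunOnFinite (Finsupp.equivFunOnFinite.symm _)) = ⇑l
    rw [Equiv.apply_symm_apply, Equiv.apply_symm_apply]
    funext x
    exact Nat.add_sub_cancel' (Finset.mem_Iic.1 hm x)
  · intro p hp
    rw [Finset.HasAntidiagonal.mem_antidiagonal] at hp
    rw [Finset.mem_Iic]
    intro x
    calc (p.1 : Fin d → ℕ) x ≤ (p.1 : Fin d → ℕ) x + (p.2 : Fin d → ℕ) x := Nat.le_add_right _ _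
      _ = (l : Fin d → ℕ) x := by rw [← hp]; rfl
  · intro m hm
    show Finsupp.equivFunOnFinite (Finsupp.equivFunOnFinite.symm m) = m
    rw [Equiv.apply_symm_apply]
  · intro p hp
    rw [Finset.HasAntidiagonal.mem_antidiagonal] at hp
    refine Prod.ext ?_ ?_
    · exact Finsupp.equivFunOnFinite_symm_coe p.1
    · show Finsupp.equivFunOnFinite.symm ((l : Fin d → ℕ) - (p.1 : Fin d → ℕ)) = p.2
      have : (l : Fin d → ℕ) - (p.1 : Fin d → ℕ) = (p.2 : Fin d → ℕ) := by
        funext x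
        have h3 : (l : Fin d → ℕ) x = (p.1 : Fin d → ℕ) x + (p.2 : Fin d → ℕ) x := by
          rw [← hp]; rfl
        show (l : Fin d → ℕ) x - (p.1 : Fin d → ℕ) x = (p.2 : Fin d → ℕ) x
        rw [h3]
        exact Nat.add_sub_cancel_left _ _
      rw [this, Finsupp.equivFunOnFinite_symm_coe]
  · intro m hm
    rw [Matrix.mul_apply]
    refine Finset.sum_congr rfl fun t _ => ?_
    show A m i t * B _ t j = A _ i t * B _ t j
    rw [show (Finsupp.equivFunOnFinite.symm m : Fin d → ℕ)
        = Finsupp.equivFunOnFinite (Finsupp.equivFunOnFinite.symm m) from rfl,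
      Equiv.apply_symm_apply]
    rw [show ((Finsupp.equivFunOnFinite.symm ((l : Fin d → ℕ) - m)) : Fin d → ℕ)
        = Finsupp.equivFunOnFinite (Finsupp.equivFunOnFinite.symm ((l : Fin d → ℕ) - m)) from rfl,
      Equiv.apply_symm_apply]

lemma Phi_foldr (L : List ((Fin d → ℕ) → Matrix (Fin s) (Fin s) ℝ)) :
    Phi (L.foldr conv oneSeq) = (L.map Phi).prod := by
  induction L with
  | nil => simpa using Phi_one
  | cons A L ih => rw [List.foldr_cons, List.map_cons, List.prod_cons, Phi_mul, ih]

lemma Phi_swap (i j : Fin s) :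
    Phi (fun k => if k = 0
        then (1 : Matrix (Fin s) (Fin s) ℝ).submatrix (Equiv.swap i j) id else 0 :
        (Fin d → ℕ) → Matrix (Fin s) (Fin s) ℝ)
      = (1 : Matrix (Fin s) (Fin s) (MvPowerSeries (Fin d) ℝ)).submatrix (Equiv.swap i j) id := by
  apply Matrix.ext
  intro a b
  apply MvPowerSeries.ext
  intro l
  by_cases hl0 : l = 0 <;> by_cases hab : Equiv.swap i j a = b <;>
    simp [Phi, Matrix.submatrix_apply, Matrix.one_apply, hl0, hab,
      MvPowerSeries.coeff_one, Finsupp.coe_eq_zero]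

lemma Phi_dil (i : Fin s) (α : (Fin d → ℕ) → ℝ) :
    Phi (fun k => Matrix.of fun a b =>
        if a = b then (if a = i then α k else deltaSeq k) else 0)
      = Matrix.of fun a b =>
          if a = b then (if a = i then toPS α else 1) else 0 := by
  apply Matrix.ext
  intro a b
  apply MvPowerSeries.ext
  intro l
  by_cases hl0 : l = 0 <;>
    simp [Phi, deltaSeq, hl0, MvPowerSeries.coeff_one, Finsupp.coe_eq_zero,
      constantCoeff_toPS, apply_ite (MvPowerSeries.coeff l),
      apply_ite (MvPowerSeries.constantCoeff)]

lemma Phi_trans (i j : Fin s) (α : (Fin d → ℕ) → ℝ) :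
    Phi (fun k => Matrix.of fun a b =>
        if a = b then deltaSeq k else if a = j ∧ b = i then α k else 0)
      = Matrix.of fun a b =>
          if a = b then 1 else if a = j ∧ b = i then toPS α else 0 := by
  apply Matrix.ext
  intro a b
  apply MvPowerSeries.ext
  intro l
  by_cases hl0 : l = 0 <;>
    simp [Phi, deltaSeq, hl0, MvPowerSeries.coeff_one, Finsupp.coe_eq_zero,
      constantCoeff_toPS, apply_ite (MvPowerSeries.coeff l),
      apply_ite (MvPowerSeries.constantCoeff)]

lemma elem_Phi {E : (Fin d → ℕ) → Matrix (Fin s) (Fin s) ℝ} (h : IsElementary E) :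
    ElemM (Phi E) := by
  rcases h with ⟨i, j, rfl⟩ | ⟨i, α, hα, rfl⟩ | ⟨i, j, α, hij, rfl⟩
  · exact Or.inl ⟨i, j, Phi_swap i j⟩
  · exact Or.inr (Or.inl ⟨i, toPS α, (isUnit_toPS α).2 hα, Phi_dil i α⟩)
  · exact Or.inr (Or.inr ⟨i, j, toPS α, hij, Phi_trans i j α⟩)

lemma Phi_elem {N : Matrix (Fin s) (Fin s) (MvPowerSeries (Fin d) ℝ)} (h : ElemM N) :
    IsElementary (PhiInv N) := by
  rcases h with ⟨i, j, rfl⟩ | ⟨i, u, hu, rfl⟩ | ⟨i, j, α, hij, rfl⟩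
  · exact Or.inl ⟨i, j, by rw [← Phi_swap i j, PhiInv_Phi]⟩
  · refine Or.inr (Or.inl ⟨i, fromPS u, ?_, ?_⟩)
    · have h1 : IsUnit (MvPowerSeries.constantCoeff u) :=
        MvPowerSeries.isUnit_iff_constantCoeff.1 hu
      have h2 : fromPS u 0 = MvPowerSeries.constantCoeff u := by
        rw [← MvPowerSeries.coeff_zero_eq_constantCoeff]
        show MvPowerSeries.coeff (Finsupp.equivFunOnFinite.symm 0) u = _
        rw [symm_zero]
      rw [h2]
      exact isUnit_iff_ne_zero.1 h1
    · have h3 : Phi (fun k => Matrix.of fun a b =>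
          if a = b then (if a = i then fromPS u k else deltaSeq k) else 0)
          = Matrix.of fun a b => if a = b then (if a = i then u else 1) else 0 := by
        rw [Phi_dil]
        simp only [toPS_fromPS]
      rw [← h3, PhiInv_Phi]
  · refine Or.inr (Or.inr ⟨i, j, fromPS α, hij, ?_⟩)
    have h3 : Phi (fun k => Matrix.of fun a b =>
        if a = b then deltaSeq k else if a = j ∧ b = i then fromPS α k else 0)
        = Matrix.of fun a b => if a = b then 1 else if a = j ∧ b = i then α else 0 := by
      rw [Phi_trans]
      simp only [toPS_fromPS]
    rw [← h3, PhiInv_Phi]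

theorem invertible_iff_product_of_elementary' {d s : ℕ}
    (A : (Fin d → ℕ) → Matrix (Fin s) (Fin s) ℝ) :
    (∃ B : (Fin d → ℕ) → Matrix (Fin s) (Fin s) ℝ,
        conv A B = oneSeq ∧ conv B A = oneSeq) ↔
    (∃ L : List ((Fin d → ℕ) → Matrix (Fin s) (Fin s) ℝ),
        (∀ E ∈ L, IsElementary E) ∧ A = L.foldr conv oneSeq) := by
  constructor
  · rintro ⟨B, h1, h2⟩
    have hU : IsUnit (Phi A) := by
      refine ⟨⟨Phi A, Phi B, ?_, ?_⟩, rfl⟩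
      · rw [← Phi_mul, h1, Phi_one]
      · rw [← Phi_mul, h2, Phi_one]
    obtain ⟨L', hL', hprod⟩ := (isUnit_iff_elem_prod (Phi A)).1 hU
    refine ⟨L'.map PhiInv, ?_, ?_⟩
    · intro E hE
      obtain ⟨N, hN, rfl⟩ := List.mem_map.1 hE
      exact Phi_elem (hL' N hN)
    · have hmap : (L'.map PhiInv).map Phi = L' := by
        rw [List.map_map]
        have : List.map (Phi ∘ PhiInv) L' = List.map id L' :=
          List.map_congr_left (fun x _ => Phi_PhiInv x)
        rw [this]
        exact List.map_id _
      have hPhi : Phi ((L'.map PhiInv).foldr conv oneSeq) = Phi A := by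
        rw [Phi_foldr, hmap, ← hprod]
      calc A = PhiInv (Phi A) := (PhiInv_Phi A).symm
        _ = PhiInv (Phi ((L'.map PhiInv).foldr conv oneSeq)) := by rw [hPhi]
        _ = (L'.map PhiInv).foldr conv oneSeq := PhiInv_Phi _
  · rintro ⟨L, hL, rfl⟩
    have hU : IsUnit (Phi (L.foldr conv oneSeq)) := by
      rw [Phi_foldr]
      apply prod_isUnit
      intro E hE
      obtain ⟨F, hF, rfl⟩ := List.mem_map.1 hE
      exact elem_Phi (hL F hF)
    obtain ⟨u, hu⟩ := hU
    refine ⟨PhiInv (↑u⁻¹), ?_, ?_⟩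
    · have : Phi (conv (L.foldr conv oneSeq) (PhiInv ↑u⁻¹)) = Phi oneSeq := by
        rw [Phi_mul, Phi_PhiInv, Phi_one, ← hu, Units.mul_inv]
      calc conv (L.foldr conv oneSeq) (PhiInv ↑u⁻¹)
          = PhiInv (Phi (conv (L.foldr conv oneSeq) (PhiInv ↑u⁻¹))) := (PhiInv_Phi _).symm
        _ = PhiInv (Phi oneSeq) := by rw [this]
        _ = oneSeq := PhiInv_Phi _
    · have : Phi (conv (PhiInv ↑u⁻¹) (L.foldr conv oneSeq)) = Phi oneSeq := by
        rw [Phi_mul, Phi_PhiInv, Phi_one, ← hu, Units.inv_mul]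
      calc conv (PhiInv ↑u⁻¹) (L.foldr conv oneSeq)
          = PhiInv (Phi (conv (PhiInv ↑u⁻¹) (L.foldr conv oneSeq))) := (PhiInv_Phi _).symm
        _ = PhiInv (Phi oneSeq) := by rw [this]
        _ = oneSeq := PhiInv_Phi _

end Translation

theorem invertible_iff_product_of_elementary {d s : ℕ}
    (A : (Fin d → ℕ) → Matrix (Fin s) (Fin s) ℝ) :
    (∃ B : (Fin d → ℕ) → Matrix (Fin s) (Fin s) ℝ,
        conv A B = oneSeq ∧ conv B A = oneSeq) ↔
    (∃ L : List ((Fin d → ℕ) → Matrix (Fin s) (Fin s) ℝ),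
        (∀ E ∈ L, IsElementary E) ∧ A = L.foldr conv oneSeq) := by
  exact invertible_iff_product_of_elementary' A
end
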